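/- Let n > 2, let V = 𝔽₂ⁿ, let g ∈ Sym(V), and let W ≤ V be a subspace such that σ_W = T ∩ T^g. If dim(W) = n − 2, then T normalises T^g, i.e. T ≤ N_{Sym(V)}(T^g). -/

import Mathlib

open Equiv

/-- `V n` is the `n`-dimensional vector space over the field with two elements. -/
abbrev V (n : ℕ) : Type := Fin n → ZMod 2

/-- The subgroup `σ_W` of `Sym(V)` consisting of the translations `x ↦ x + w` with `w ∈ W`. -/
def sigmaSub (n : ℕ) (W : Submodule (ZMod 2) (V n)) : Subgroup (Equiv.Perm (V n)) where
  carrier := {g | ∃ v ∈ W, ∀ x, g x = x + v}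
  one_mem' := ⟨0, W.zero_mem, fun x => by simp⟩
  mul_mem' := by
    rintro a b ⟨v, hv, ha⟩ ⟨w, hw, hb⟩
    exact ⟨w + v, W.add_mem hw hv, fun x => by
      simp [Equiv.Perm.mul_apply, ha, hb, add_assoc]⟩
  inv_mem' := by
    rintro a ⟨v, hv, ha⟩
    refine ⟨-v, W.neg_mem hv, fun x => a.injective ?_⟩
    rw [← Equiv.Perm.mul_apply, mul_inv_cancel, Equiv.Perm.one_apply, ha]
    abel

/-- The translation group `T`, i.e. the image of the right regular representation
of `(V, +)` in `Sym(V)`. -/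
def T (n : ℕ) : Subgroup (Equiv.Perm (V n)) := sigmaSub n ⊤

/-- The affine group `AGL(V) = T ⋊ GL(V)`, consisting of the invertible affine
transformations `x ↦ L x + v` of `V`. -/
def AGL (n : ℕ) : Subgroup (Equiv.Perm (V n)) where
  carrier := {g | ∃ (L : V n ≃ₗ[ZMod 2] V n) (v : V n), ∀ x, g x = L x + v}
  one_mem' := ⟨LinearEquiv.refl _ _, 0, fun x => by simp⟩
  mul_mem' := by
    rintro a b ⟨L, v, ha⟩ ⟨M, w, hb⟩
    exact ⟨M ≪≫ₗ L, L w + v, fun x => by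
      simp [Equiv.Perm.mul_apply, ha, hb, map_add, add_assoc]⟩
  inv_mem' := by
    rintro a ⟨L, v, ha⟩
    refine ⟨L.symm, -(L.symm v), fun x => a.injective ?_⟩
    rw [← Equiv.Perm.mul_apply, mul_inv_cancel, Equiv.Perm.one_apply, ha, map_add, map_neg, LinearEquiv.apply_symm_apply,
      LinearEquiv.apply_symm_apply]
    abel

/-- The conjugate subgroup `H^g = g⁻¹ H g`. -/
def conjSub {G : Type*} [Group G] (H : Subgroup G) (g : G) : Subgroup G :=
  H.map (MulAut.conj g⁻¹).toMonoidHom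

/-- A subgroup of `Sym(V)` is an elementary abelian regular subgroup if it is an
elementary abelian 2-group (every element squares to the identity) acting
regularly (sharply transitively) on `V`. -/
def IsElemAbelianRegular (n : ℕ) (R : Subgroup (Equiv.Perm (V n))) : Prop :=
  (∀ r ∈ R, r * r = 1) ∧ ∀ x y : V n, ∃! r : R, (r : Equiv.Perm (V n)) x = y

/-- `A` is a normal subgroup of `B` (as subgroups of a common ambient group). -/
def NormalIn {G : Type*} [Group G] (A B : Subgroup G) : Prop :=
  A ≤ B ∧ ∀ b ∈ B, ∀ a ∈ A, b * a * b⁻¹ ∈ A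

/-- `S` is a Sylow `2`-subgroup of `K` (as subgroups of a common ambient group):
`S` is a `2`-subgroup of `K` maximal among the `2`-subgroups of `K`. -/
def IsSylow2Of {G : Type*} [Group G] (S K : Subgroup G) : Prop :=
  S ≤ K ∧ IsPGroup 2 S ∧ ∀ Q : Subgroup G, Q ≤ K → IsPGroup 2 Q → S ≤ Q → Q = S



lemma add_self_V {n : ℕ} (u : V n) : u + u = 0 := by
  ext i; exact CharTwo.add_self_eq_zero _

lemma two_nsmul_V {n : ℕ} (u : V n) : (2 : ℕ) • u = 0 := by
  rw [two_smul]; exact add_self_V u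

lemma two_zsmul_V {n : ℕ} (u : V n) : (2 : ℤ) • u = 0 := by
  rw [two_zsmul]; exact add_self_V u

lemma two_mul_V {n : ℕ} (u : V n) : 2 * u = 0 := by
  rw [two_mul]; exact add_self_V u

/-- In a `ZMod 2`-module with at most 4 elements, four suitably distinct elements
exhaust everything. -/
lemma four_cases {Q : Type*} [AddCommGroup Q] [Module (ZMod 2) Q] [Finite Q]
    (hcard : Nat.card Q ≤ 4) (a b : Q) (ha : a ≠ 0) (hb : b ≠ 0) (hab : a ≠ b) (q : Q) :
    q = 0 ∨ q = a ∨ q = b ∨ q = a + b := by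
  by_contra hq
  push_neg at hq
  obtain ⟨hq0, hqa, hqb, hqab⟩ := hq
  have hchar : ∀ u : Q, u + u = 0 := fun u => by
    rw [← two_smul (ZMod 2) u, show (2 : ZMod 2) = 0 from rfl, zero_smul]
  have hab0 : a + b ≠ 0 := fun h => hab (by
    have : a + (a + b) = a + 0 := by rw [h]
    rwa [← add_assoc, hchar, zero_add, add_zero, eq_comm] at this)
  have haab : a ≠ a + b := fun h => hb (by
    have := add_left_cancel (a := a) (b := (0 : Q)) (c := b) (by rw [add_zero, ← h])
    exact this.symm)
  have hbab : b ≠ a + b := fun h => ha (by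
    have h2 : a + b = 0 + b := by rw [zero_add]; exact h.symm
    exact add_right_cancel h2)
  have hinj : Function.Injective (![0, a, b, a + b, q] : Fin 5 → Q) := by
    intro i j hij
    fin_cases i <;> fin_cases j <;>
      simp_all [eq_comm, Matrix.cons_val_zero, Matrix.cons_val_one]
  have := Nat.card_le_card_of_injective _ hinj
  simp [Nat.card_eq_fintype_card] at this
  omega

/-- The core computation: if `H ≤ Sym(V)` is abelian, of exponent 2, transitive,
contains the translations by `W`, and `V/W` has at most 4 elements, then conjugating
any element of `H` by a translation lands back in `H`. -/
lemma key_conj_mem (n : ℕ) (W : Submodule (ZMod 2) (V n))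
    (hcard : Nat.card (V n ⧸ W) ≤ 4)
    (H : Subgroup (Equiv.Perm (V n)))
    (h2 : ∀ a ∈ H, a * a = 1)
    (hcomm : ∀ a ∈ H, ∀ b ∈ H, a * b = b * a)
    (htrans : ∀ x y : V n, ∃ a ∈ H, a x = y)
    (hS : ∀ w ∈ W, Equiv.addRight w ∈ H)
    (v : V n) (τ : Equiv.Perm (V n)) (hτ : τ ∈ H) :
    Equiv.addRight v * τ * Equiv.addRight v ∈ H := by
  classical
  set π := W.mkQ with hπdef
  have hcharQ : ∀ u : V n ⧸ W, u + u = 0 := fun u => by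
    rw [← two_smul (ZMod 2) u, show (2 : ZMod 2) = 0 from rfl, zero_smul]
  have h2Q : ∀ u : V n ⧸ W, (2 : ℕ) • u = 0 := fun u => by rw [two_smul]; exact hcharQ u
  have h2Qz : ∀ u : V n ⧸ W, (2 : ℤ) • u = 0 := fun u => by rw [two_zsmul]; exact hcharQ u
  -- basic facts
  have hττ : ∀ x, τ (τ x) = x := by
    intro x
    have h := h2 τ hτ
    calc τ (τ x) = (τ * τ) x := rfl
    _ = (1 : Equiv.Perm (V n)) x := by rw [h]
    _ = x := rfl
  -- any element of H commutes with W-translations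
  have hWc : ∀ ρ ∈ H, ∀ w ∈ W, ∀ x, ρ (x + w) = ρ x + w := by
    intro ρ hρ w hw x
    have h := hcomm ρ hρ _ (hS w hw)
    have := Equiv.ext_iff.mp h x
    simpa [Equiv.Perm.mul_apply] using this
  set h : V n → V n := fun x => τ x + x with hh
  have hdef : ∀ x, h x = τ x + x := fun x => by rw [hh]
  have hτx : ∀ x, τ x = x + h x := by
    intro x
    have e : x + (τ x + x) = τ x := by
      calc x + (τ x + x) = τ x + (x + x) := by abel
      _ = τ x := by rw [add_self_V, add_zero]
    exact e.symm
  -- h is invariant under W-shifts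
  have hF4 : ∀ x, ∀ w ∈ W, h (x + w) = h x := by
    intro x w hw
    show τ (x + w) + (x + w) = τ x + x
    rw [hWc τ hτ w hw]
    calc τ x + w + (x + w) = τ x + x + (w + w) := by abel
    _ = τ x + x := by rw [add_self_V, add_zero]
  have hF4' : ∀ x y, π x = π y → h x = h y := by
    intro x y hxy
    have hsub : x - y ∈ W := (Submodule.Quotient.eq W).mp hxy
    have hx : x = y + (x - y) := by abel
    rw [hx, hF4 y _ hsub]
  have hF3 : ∀ x, h (τ x) = h x := by
    intro x
    show τ (τ x) + τ x = τ x + x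
    rw [hττ, add_comm]
  -- combined: if π u = π (x + h x) then h u = h x
  have hF3' : ∀ u x, π u = π (x + h x) → h u = h x := by
    intro u x hu
    rw [hF4' u (x + h x) hu, ← hτx, hF3]
  -- the conjugate, pointwise
  have hconj : ∀ x, (Equiv.addRight v * τ * Equiv.addRight v) x = x + v + h (x + v) + v := by
    intro x
    simp only [Equiv.Perm.mul_apply, Equiv.coe_addRight]
    rw [hτx (x + v)]
  clear_value h
  by_cases hc : ∃ x₀, h x₀ ∈ W
  · -- case 1 : h is constant
    obtain ⟨x₀, hx₀⟩ := hc
    have hconst : ∀ y, h y = h x₀ := by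
      intro y
      obtain ⟨ρ, hρ, hρx⟩ := htrans x₀ y
      have hcom := Equiv.ext_iff.mp (hcomm τ hτ ρ hρ) x₀
      simp only [Equiv.Perm.mul_apply] at hcom
      have hty : τ y = y + h x₀ := by
        rw [← hρx, hcom, hτx x₀, hWc ρ hρ _ hx₀, hρx]
      rw [hdef y, hty]
      calc y + h x₀ + y = h x₀ + (y + y) := by abel
      _ = h x₀ := by rw [add_self_V, add_zero]
    have heq : Equiv.addRight v * τ * Equiv.addRight v = τ := by
      apply Equiv.ext
      intro x
      rw [hconj, hτx x, hconst (x + v), hconst x]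
      abel_nf
      simp [two_nsmul_V, two_zsmul_V, two_mul_V, add_self_V]
    rw [heq]; exact hτ
  · push_neg at hc
    have hc' : ∀ x, π (h x) ≠ 0 := by
      intro x hx
      exact hc x ((Submodule.Quotient.mk_eq_zero W).mp hx)
    -- Lemma A : π ∘ h is constant
    have hA : ∀ x y, π (h x) = π (h y) := by
      intro x y
      by_contra hab
      have goal : h x = h y → False := fun e => hab (by rw [e])
      rcases four_cases hcard (π (h x)) (π (h y)) (hc' x) (hc' y) hab (π y - π x) with
        h0 | ha | hb | hab'
      · exact goal (hF4' x y (sub_eq_zero.mp h0).symm)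
      · have hy : π y = π (x + h x) := by
          rw [map_add, add_comm]; exact eq_add_of_sub_eq ha
        exact goal (hF3' y x hy).symm
      · have h1 : π y = π (h y) + π x := eq_add_of_sub_eq hb
        have hx : π x = π (y + h y) := by
          rw [map_add, h1]; abel_nf; simp [h2Q, h2Qz, hcharQ]
        exact goal (hF3' x y hx)
      · have h1 : π y = (π (h x) + π (h y)) + π x := eq_add_of_sub_eq hab'
        have hkey : π (y + h y) = π (x + h x) := by
          rw [map_add, map_add, h1]
          calc π (h x) + π (h y) + π x + π (h y)
              = π x + π (h x) + (π (h y) + π (h y)) := by abel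
            _ = π x + π (h x) := by rw [hcharQ, add_zero]
        have := hF4' (y + h y) (x + h x) hkey
        rw [← hτx, ← hτx, hF3, hF3] at this
        exact goal this.symm
    by_cases hv0 : π v = 0 ∨ π v = π (h 0)
    · -- h is invariant under shift by v
      have hshift : ∀ x, h (x + v) = h x := by
        intro x
        rcases hv0 with hv | hv
        · exact hF4' (x + v) x (by rw [map_add, hv, add_zero])
        · refine hF3' (x + v) x ?_
          rw [map_add, map_add, hv, hA 0 x]
      have heq : Equiv.addRight v * τ * Equiv.addRight v = τ := by
        apply Equiv.ext
        intro x
        rw [hconj, hshift, hτx x]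
        abel_nf
        simp [two_nsmul_V, two_zsmul_V, two_mul_V, add_self_V]
      rw [heq]; exact hτ
    · push_neg at hv0
      obtain ⟨hv1, hv2⟩ := hv0
      set s := h v + h 0 with hsdef
      have hsW : s ∈ W := by
        rw [← Submodule.Quotient.mk_eq_zero W]
        show π s = 0
        rw [hsdef, map_add, hA v 0, hcharQ]
      have hstep : ∀ x, h (x + v) = h x + s := by
        intro x
        rcases four_cases hcard (π (h 0)) (π v) (hc' 0) hv1 (Ne.symm hv2) (π x) with
          hx0 | hxa | hxv | hxav
        · have hx : h x = h 0 := hF4' x 0 (by rw [hx0, map_zero])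
          have hxv' : h (x + v) = h v := hF4' (x + v) v (by rw [map_add, hx0, zero_add])
          rw [hxv', hx, hsdef]; abel_nf; simp [two_nsmul_V, two_zsmul_V, two_mul_V, add_self_V]
        · have hx : h x = h 0 := by
            refine hF3' x 0 ?_
            rw [zero_add]; exact hxa
          have hxv' : h (x + v) = h v := by
            refine hF3' (x + v) v ?_
            rw [map_add, map_add, hxa, hA 0 v]; exact add_comm _ _
          rw [hxv', hx, hsdef]; abel_nf; simp [two_nsmul_V, two_zsmul_V, two_mul_V, add_self_V]
        · have hx : h x = h v := hF4' x v hxv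
          have hxv' : h (x + v) = h 0 := by
            refine hF4' (x + v) 0 ?_
            rw [map_add, hxv, hcharQ, map_zero]
          rw [hxv', hx, hsdef]; abel_nf; simp [two_nsmul_V, two_zsmul_V, two_mul_V, add_self_V]
        · have hx : h x = h v := by
            refine hF3' x v ?_
            rw [map_add, hxav, hA 0 v]; exact add_comm _ _
          have hxv' : h (x + v) = h 0 := by
            refine hF3' (x + v) 0 ?_
            rw [map_add, hxav, zero_add]; abel_nf; simp [h2Q, h2Qz, hcharQ]
          rw [hxv', hx, hsdef]; abel_nf; simp [two_nsmul_V, two_zsmul_V, two_mul_V, add_self_V]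
      have heq : Equiv.addRight v * τ * Equiv.addRight v = Equiv.addRight s * τ := by
        apply Equiv.ext
        intro x
        rw [hconj, hstep]
        show x + v + (h x + s) + v = τ x + s
        rw [hτx x]
        abel_nf
        simp [two_nsmul_V, two_zsmul_V, two_mul_V, add_self_V]
      rw [heq]
      exact H.mul_mem (hS s hsW) hτ

section instHelpers
variable {n : ℕ} (g : Equiv.Perm (V n))

lemma addRight_mem_T (v : V n) : Equiv.addRight v ∈ T n := ⟨v, trivial, fun _ => rfl⟩

lemma T_sq : ∀ t ∈ T n, t * t = 1 := by
  rintro t ⟨v, -, hv⟩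
  apply Equiv.ext
  intro x
  simp only [Equiv.Perm.mul_apply, hv, Equiv.Perm.one_apply]
  rw [add_assoc, add_self_V, add_zero]

lemma T_comm : ∀ a ∈ T n, ∀ b ∈ T n, a * b = b * a := by
  rintro a ⟨u, -, hu⟩ b ⟨w, -, hw⟩
  apply Equiv.ext
  intro x
  simp only [Equiv.Perm.mul_apply, hu, hw]
  abel

lemma H_sq : ∀ a ∈ conjSub (T n) g, a * a = 1 := by
  rintro a ha
  obtain ⟨t, ht, rfl⟩ := Subgroup.mem_map.mp ha
  rw [← map_mul, T_sq t ht, map_one]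

lemma H_comm : ∀ a ∈ conjSub (T n) g, ∀ b ∈ conjSub (T n) g, a * b = b * a := by
  rintro a ha b hb
  obtain ⟨t, ht, rfl⟩ := Subgroup.mem_map.mp ha
  obtain ⟨u, hu, rfl⟩ := Subgroup.mem_map.mp hb
  rw [← map_mul, ← map_mul, T_comm t ht u hu]

lemma H_trans : ∀ x y : V n, ∃ a ∈ conjSub (T n) g, a x = y := by
  intro x y
  refine ⟨(MulAut.conj g⁻¹).toMonoidHom (Equiv.addRight (g y - g x)),
    Subgroup.mem_map.mpr ⟨_, addRight_mem_T _, rfl⟩, ?_⟩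
  simp only [MulEquiv.toMonoidHom_eq_coe, MonoidHom.coe_coe, MulAut.conj_apply, inv_inv,
    Equiv.Perm.mul_apply, Equiv.coe_addRight]
  have : g x + (g y - g x) = g y := by abel
  rw [this]; exact g.symm_apply_apply y

end instHelpers

/-- If `σ_W = T ∩ T^g` with `dim W = n - 2`, then `T` normalises `T^g`. -/
theorem translationGroup_le_normalizer_conj_of_second_maximal_intersection
    (n : ℕ) (hn : 2 < n) (g : Equiv.Perm (V n))
    (W : Submodule (ZMod 2) (V n))
    (hW : sigmaSub n W = T n ⊓ conjSub (T n) g)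
    (hdim : Module.finrank (ZMod 2) W = n - 2) :
    T n ≤ Subgroup.normalizer (conjSub (T n) g : Set (Equiv.Perm (V n))) := by
  intro t ht
  -- cardinality of the quotient
  have hfin : Module.finrank (ZMod 2) (V n ⧸ W) + Module.finrank (ZMod 2) W
      = Module.finrank (ZMod 2) (V n) := Submodule.finrank_quotient_add_finrank W
  have hrV : Module.finrank (ZMod 2) (V n) = n := by
    simp [Module.finrank_pi (ZMod 2) (ι := Fin n)]
  have hrQ : Module.finrank (ZMod 2) (V n ⧸ W) = 2 := by omega
  have hft : Fintype (V n ⧸ W) := Fintype.ofFinite _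
  have hcard : Nat.card (V n ⧸ W) ≤ 4 := by
    rw [Nat.card_eq_fintype_card, Module.card_eq_pow_finrank (K := ZMod 2), hrQ, ZMod.card]
    norm_num
  have hS : ∀ w ∈ W, Equiv.addRight w ∈ conjSub (T n) g := by
    intro w hw
    have hmem : Equiv.addRight w ∈ sigmaSub n W := ⟨w, hw, fun _ => rfl⟩
    rw [hW] at hmem
    exact hmem.2
  obtain ⟨v, -, htv⟩ := id ht
  have hteq : t = Equiv.addRight v := Equiv.ext htv
  have ht2 : t * t = 1 := T_sq t ht
  have htinv : t⁻¹ = t := inv_eq_of_mul_eq_one_right ht2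
  rw [Subgroup.mem_normalizer_iff]
  intro q
  constructor
  · intro hq
    rw [htinv, hteq]
    exact key_conj_mem n W hcard _ (H_sq g) (H_comm g) (H_trans g) hS v q hq
  · intro hq
    have h3 := key_conj_mem n W hcard _ (H_sq g) (H_comm g) (H_trans g) hS v _ hq
    have he : Equiv.addRight v * (t * q * t⁻¹) * Equiv.addRight v = q := by
      rw [htinv, ← hteq]
      calc t * (t * q * t) * t = (t * t) * q * (t * t) := by group
      _ = q := by rw [ht2, one_mul, mul_one]
    rwa [he] at h3
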